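/- There exists θ₀ ∈ (0,1) such that for every θ ∈ (0,θ₀], every ε > 0, every t ≥ 0 and every r > 0 with 1−θ ≤ 2εr ≤ 1, one has exp(−(1−θ)·t/(2ε²)) · sinh( t·√(1−4ε²r²)/(2ε²) ) ≤ exp(−θ·t·r²). -/

import Mathlib

/-- There is `θ₀ ∈ (0,1)` such that for all `θ ∈ (0,θ₀]`, `ε > 0`, `t ≥ 0` and `r > 0` with
`1−θ ≤ 2εr ≤ 1`, one has `e^{−(1−θ)t/(2ε²)} · sinh(t√(1−4ε²r²)/(2ε²)) ≤ e^{−θtr²}`. -/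
theorem dampedWave_threshold_window_bound :
    ∃ θ₀ : ℝ, θ₀ ∈ Set.Ioo (0:ℝ) 1 ∧
      ∀ θ ∈ Set.Ioc (0:ℝ) θ₀, ∀ ε t r : ℝ, 0 < ε → 0 ≤ t → 0 < r →
        1 - θ ≤ 2 * ε * r → 2 * ε * r ≤ 1 →
        Real.exp (-(1 - θ) * t / (2 * ε ^ 2)) *
          Real.sinh (t * Real.sqrt (1 - 4 * ε ^ 2 * r ^ 2) / (2 * ε ^ 2))
          ≤ Real.exp (-θ * t * r ^ 2) := by
  refine ⟨1/8, ⟨by norm_num, by norm_num⟩, ?_⟩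
  rintro θ ⟨hθ0, hθ8⟩ ε t r hε ht hr h1 h2
  set s := Real.sqrt (1 - 4 * ε ^ 2 * r ^ 2) with hs
  have hs0 : 0 ≤ s := Real.sqrt_nonneg _
  have hε2 : (0:ℝ) < 2 * ε ^ 2 := by positivity
  -- s ≤ 1/2
  have hsq : s ^ 2 ≤ 1/4 := by
    have hx : 1 - 4 * ε ^ 2 * r ^ 2 ≤ 1/4 := by nlinarith
    rcases le_or_gt (1 - 4 * ε ^ 2 * r ^ 2) 0 with h | h
    · have : s = 0 := Real.sqrt_eq_zero_of_nonpos h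
      simp [this]
    · rw [Real.sq_sqrt h.le]; exact hx
  have hs12 : s ≤ 1/2 := by nlinarith
  -- key: s ≤ (1 - θ) - 2 * ε^2 * θ * r^2
  have hεr : 2 * ε ^ 2 * r ^ 2 ≤ 1/2 := by nlinarith
  have hkey : s ≤ (1 - θ) - 2 * ε ^ 2 * θ * r ^ 2 := by nlinarith
  -- sinh B ≤ exp B
  set B := t * s / (2 * ε ^ 2) with hB
  have hsinh : Real.sinh B ≤ Real.exp B := by
    rw [Real.sinh_eq]
    nlinarith [Real.exp_pos B, Real.exp_pos (-B)]
  have hexppos : (0:ℝ) < Real.exp (-(1 - θ) * t / (2 * ε ^ 2)) := Real.exp_pos _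
  calc Real.exp (-(1 - θ) * t / (2 * ε ^ 2)) * Real.sinh B
      ≤ Real.exp (-(1 - θ) * t / (2 * ε ^ 2)) * Real.exp B := by
        exact mul_le_mul_of_nonneg_left hsinh hexppos.le
    _ = Real.exp (-(1 - θ) * t / (2 * ε ^ 2) + B) := (Real.exp_add _ _).symm
    _ ≤ Real.exp (-θ * t * r ^ 2) := by
        apply Real.exp_le_exp.mpr
        rw [hB, ← add_div, div_le_iff₀ hε2]
        have : -(1 - θ) * t + t * s ≤ t * (-2 * ε ^ 2 * θ * r ^ 2) := by
          have := mul_le_mul_of_nonneg_left hkey ht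
          nlinarith
        nlinarith
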